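/- arXiv:1009.4152 — 10 statements merged into one kernel-verified Lean document; each statement's English description precedes it below -/
import Mathlib

section
/- Let X be a type, M = (X →₀ ℕ), and φ : M →+ M an additive monoid homomorphism. For all m, n ∈ M and i, j ∈ ℕ, the following are equivalent: (1) there exist p ∈ M and k ∈ ℕ with j = k + i and n = p + φ^[k] m (i.e., the monomial m·s^i left-divides n·s^j in the skew monomial monoid); (2) i ≤ j and φ^[j−i] m ≤ n in the pointwise order on M (i.e., σ^{j−i}(m) divides n). -/
/-- **Left divisibility of monomials in the skew monomial monoid.**
The monomial `m·s^i` left-divides `n·s^j` iff `i ≤ j` and `σ^{j-i}(m)` divides `n`. -/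
theorem skew_left_divides_iff {X : Type*} (φ : (X →₀ ℕ) →+ (X →₀ ℕ))
    (m n : X →₀ ℕ) (i j : ℕ) :
    (∃ (p : X →₀ ℕ) (k : ℕ), j = k + i ∧ n = p + (⇑φ)^[k] m) ↔
      (i ≤ j ∧ (⇑φ)^[j - i] m ≤ n) := by
  constructor
  · rintro ⟨p, k, rfl, rfl⟩
    refine ⟨Nat.le_add_left _ _, ?_⟩
    simp [le_add_iff_nonneg_left]
  · rintro ⟨hij, h⟩
    exact ⟨n - (⇑φ)^[j - i] m, j - i, by omega, (tsub_add_cancel_of_le h).symm⟩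
end

section
/- Let X be a type, M = (X →₀ ℕ), φ : M →+ M, and let ⋄ be the product on M × ℕ given by (m,i) ⋄ (n,j) = (m + φ^[i] n, i + j). Suppose ≺ is a strict linear order (irreflexive, transitive, total) on M × ℕ whose associated relation is well-founded and which is two-sidedly compatible with ⋄, i.e., u ≺ v implies p ⋄ u ⋄ q ≺ p ⋄ v ⋄ q for all u, v, p, q ∈ M × ℕ. Then: (a) for all m, n ∈ M, (m,0) ≺ (n,0) implies (φ m, 0) ≺ (φ n, 0) (σ is compatible with the restriction of ≺ to the monomials of P); and (b) for all m, n ∈ M and i, j ∈ ℕ, (m,i) ≺ (n,j) implies (m,0) ≺ (n,0) or i < j. -/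
/-- The product of the monomials of the skew polynomial ring `K[X][s;σ]`:
`(m,i)` represents `m·s^i` and `(m,i) ⋄ (n,j) = (m + φ^[i] n, i + j)`, where `φ` is the
exponent map of the monomial endomorphism `σ`. -/
noncomputable def skewMul {X : Type*} (φ : (X →₀ ℕ) →+ (X →₀ ℕ)) (u v : (X →₀ ℕ) × ℕ) : (X →₀ ℕ) × ℕ :=
  (u.1 + (⇑φ)^[u.2] v.1, u.2 + v.2)

/-- **(Proposition `toS2P`.)** Any monomial ordering of the skew polynomial ring restricts to
a monomial ordering of `P` with which `σ` is compatible; moreover `m·s^i ≺ n·s^j` implies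
`m ≺ n` or `i < j`. -/
theorem skew_monomial_order_restrict {X : Type*} (φ : (X →₀ ℕ) →+ (X →₀ ℕ))
    (r : ((X →₀ ℕ) × ℕ) → ((X →₀ ℕ) × ℕ) → Prop)
    (hirr : ∀ u, ¬ r u u)
    (htrans : ∀ u v w, r u v → r v w → r u w)
    (htotal : ∀ u v, u ≠ v → r u v ∨ r v u)
    (hwf : WellFounded r)
    (hcompat : ∀ u v p q, r u v → r (skewMul φ p (skewMul φ u q)) (skewMul φ p (skewMul φ v q))) :
    (∀ m n : X →₀ ℕ, r (m, 0) (n, 0) → r (φ m, 0) (φ n, 0)) ∧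
      (∀ (m n : X →₀ ℕ) (i j : ℕ), r (m, i) (n, j) → r (m, 0) (n, 0) ∨ i < j) := by
  have hright : ∀ u v q, r u v → r (skewMul φ u q) (skewMul φ v q) := by
    intro u v q h
    have := hcompat u v (0, 0) q h
    simpa [skewMul] using this
  have hkey : ∀ (m : X →₀ ℕ) (i j : ℕ), j < i → ¬ r (m, i) (m, j) := by
    intro m i j hij hr
    set d := i - j with hd
    have hf : ∀ t : ℕ, r (m, j + (t + 1) * d) (m, j + t * d) := by
      intro t
      have h1 := hright (m, i) (m, j) (0, t * d) hr
      simp only [skewMul, map_zero, Function.iterate_fixed (map_zero φ), add_zero] at h1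
      have hid : i = j + d := by omega
      have h2 : i + t * d = j + (t + 1) * d := by rw [hid]; ring
      rwa [h2] at h1
    haveI : IsStrictOrder ((X →₀ ℕ) × ℕ) r :=
      { irrefl := hirr, trans := htrans }
    exact RelEmbedding.not_wellFounded
      (RelEmbedding.natGT (fun t => (m, j + t * d)) hf) hwf
  constructor
  · intro m n h
    have h1 := hcompat (m, 0) (n, 0) (0, 1) (0, 0) h
    have h1' : r (φ m, 1) (φ n, 1) := by
      simpa [skewMul, map_zero] using h1
    by_contra hne
    rcases eq_or_ne (φ m) (φ n) with he | hne2
    · exact hirr _ (he ▸ h1')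
    · rcases htotal (φ m, 0) (φ n, 0) (by simp [hne2]) with h2 | h2
      · exact hne h2
      · have h3 := hright (φ n, 0) (φ m, 0) (0, 1) h2
        have h3' : r (φ n, 1) (φ m, 1) := by
          simpa [skewMul, map_zero] using h3
        exact hirr _ (htrans _ _ _ h1' h3')
  · intro m n i j h
    by_contra hcon
    push_neg at hcon
    obtain ⟨h0, hij⟩ := hcon
    rcases eq_or_ne m n with rfl | hmn
    · rcases eq_or_lt_of_le hij with rfl | hlt
      · exact hirr _ h
      · exact hkey m i j hlt h
    · rcases htotal (m, 0) (n, 0) (by simp [hmn]) with h2 | h2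
      · exact h0 h2
      · have h3 := hright (n, 0) (m, 0) (0, j) h2
        have h3' : r (n, j) (m, j) := by
          simpa [skewMul, map_zero] using h3
        have h4 := htrans _ _ _ h h3'
        rcases eq_or_lt_of_le hij with rfl | hlt
        · exact hirr _ h4
        · exact hkey m i j hlt h4
end

section
/- Let m be a monomial order on X →₀ ℕ and let φ : (X →₀ ℕ) →+ (X →₀ ℕ) be compatible with m, i.e., m.toSyn d < m.toSyn e implies m.toSyn (φ d) < m.toSyn (φ e). Define the relation ≺' on (X →₀ ℕ) × ℕ by (d,i) ≺' (e,j) iff i < j, or i = j and m.toSyn d < m.toSyn e. Then ≺' is well-founded and is two-sidedly compatible with the skew product ⋄, i.e., u ≺' v implies p ⋄ u ⋄ q ≺' p ⋄ v ⋄ q for all u, v, p, q, where (d,i) ⋄ (e,j) = (d + φ^[i] e, i + j). Hence ≺' is a monomial ordering of the skew polynomial ring extending the given monomial order on P. -/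
/-- The extension `≺'` of a monomial order `m` on `P` to the monomials of the skew polynomial
ring: `(d,i) ≺' (e,j)` iff `i < j`, or `i = j` and `d ≺[m] e`. -/
def skewLt {X : Type*} (m : MonomialOrder X) (u v : (X →₀ ℕ) × ℕ) : Prop :=
  u.2 < v.2 ∨ (u.2 = v.2 ∧ m.toSyn u.1 < m.toSyn v.1)

/-- **(Proposition `toP2S`.)** If `φ` is compatible with the monomial order `m` of `P`, then
the extended ordering `≺'` is a monomial ordering of the skew polynomial ring: it is
well-founded and two-sidedly compatible with the skew product `⋄`. -/
theorem skewLt_isMonomialOrdering {X : Type*} (m : MonomialOrder X)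
    (φ : (X →₀ ℕ) →+ (X →₀ ℕ))
    (hφ : ∀ d e : X →₀ ℕ, m.toSyn d < m.toSyn e → m.toSyn (φ d) < m.toSyn (φ e)) :
    WellFounded (skewLt m) ∧
      ∀ u v p q, skewLt m u v →
        skewLt m (skewMul φ p (skewMul φ u q)) (skewMul φ p (skewMul φ v q)) := by
  constructor
  · have hwf : WellFounded (Prod.Lex (· < · : ℕ → ℕ → Prop) (· < · : m.syn → m.syn → Prop)) :=
      WellFounded.prod_lex (wellFounded_lt) (m.wf.wf)
    have : skewLt m = InvImage (Prod.Lex (· < ·) (· < ·))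
        (fun u => (u.2, m.toSyn u.1)) := by
      ext u v
      constructor
      · rintro (h | ⟨he, h⟩)
        · exact Prod.Lex.left _ _ h
        · show Prod.Lex _ _ (u.2, m.toSyn u.1) (v.2, m.toSyn v.1)
          rw [he]
          exact Prod.Lex.right _ h
      · intro h
        rcases Prod.lex_iff.mp h with h | ⟨he, h⟩
        · exact Or.inl h
        · exact Or.inr ⟨he, h⟩
    rw [this]
    exact InvImage.wf _ hwf
  · have hiter : ∀ (k : ℕ) (d e : X →₀ ℕ), m.toSyn d < m.toSyn e →
        m.toSyn ((⇑φ)^[k] d) < m.toSyn ((⇑φ)^[k] e) := by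
      intro k
      induction k with
      | zero => simp
      | succ n ih =>
        intro d e h
        rw [Function.iterate_succ_apply', Function.iterate_succ_apply']
        exact hφ _ _ (ih _ _ h)
    rintro ⟨d, i⟩ ⟨e, j⟩ ⟨a, k⟩ ⟨b, l⟩ (h | ⟨he, h⟩)
    · exact Or.inl (by simp [skewMul]; omega)
    · subst he
      refine Or.inr ⟨rfl, ?_⟩
      simp only [skewMul]
      have hadd : ∀ (n : ℕ) (x y : X →₀ ℕ), (⇑φ)^[n] (x + y) = (⇑φ)^[n] x + (⇑φ)^[n] y := by
        intro n
        induction n with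
        | zero => simp
        | succ p ih =>
          intro x y
          rw [Function.iterate_succ_apply', Function.iterate_succ_apply',
            Function.iterate_succ_apply', ih, map_add]
      rw [hadd, hadd, map_add, map_add, map_add, map_add]
      have := hiter k _ _ h
      exact add_lt_add_right (add_lt_add_left this _) _
end

section
/- Let X be a type, M = (X →₀ ℕ), and φ : M →+ M an additive monoid homomorphism. The following are equivalent: (a) for all i ≠ j in X, the supports of φ (Finsupp.single i 1) and φ (Finsupp.single j 1) are disjoint (i.e., gcd(σ(x_i), σ(x_j)) = 1 for the corresponding monomial endomorphism σ); (b) for all m, n ∈ M, φ (m ⊓ n) = φ m ⊓ φ n, where ⊓ is the pointwise minimum (i.e., gcd(σ(m), σ(n)) = σ(gcd(m,n)) for all monomials m, n). -/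
private lemma apply_eq_of_unique {X : Type*} (φ : (X →₀ ℕ) →+ (X →₀ ℕ)) (k : X) (i : X)
    (h : ∀ j : X, j ≠ i → (φ (Finsupp.single j 1)) k = 0) (m : X →₀ ℕ) :
    (φ m) k = m i * (φ (Finsupp.single i 1)) k := by
  induction m using Finsupp.induction with
  | zero => simp
  | single_add a b rest ha hb ih =>
    have hs : (Finsupp.single a b : X →₀ ℕ) = b • Finsupp.single a 1 := by
      simp [Finsupp.smul_single]
    rw [map_add, hs, map_nsmul]
    simp only [Finsupp.add_apply, Finsupp.coe_smul, Pi.smul_apply, smul_eq_mul, ih]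
    by_cases hai : a = i
    · subst hai
      simp [Finsupp.single_apply, add_mul]
    · rw [h a hai]
      simp [Finsupp.single_apply, hai]

/-- **(Proposition `divcompat`, (a) ⇔ (b).)** For the exponent map `φ` of a monomial
endomorphism `σ` of `K[X]`, the images of distinct variables have disjoint supports
(`gcd(σ(x_i), σ(x_j)) = 1` for `i ≠ j`) if and only if `φ` preserves pointwise minima
(`gcd(σ(m), σ(n)) = σ(gcd(m, n))` for all monomials `m, n`). -/
theorem gcd_compatible_iff {X : Type*} (φ : (X →₀ ℕ) →+ (X →₀ ℕ)) :
    (∀ i j : X, i ≠ j →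
        Disjoint (φ (Finsupp.single i 1)).support (φ (Finsupp.single j 1)).support) ↔
      (∀ m n : X →₀ ℕ, φ (m ⊓ n) = φ m ⊓ φ n) := by
  constructor
  · intro h m n
    ext k
    rw [Finsupp.inf_apply]
    by_cases hex : ∃ i : X, (φ (Finsupp.single i 1)) k ≠ 0
    · obtain ⟨i, hi⟩ := hex
      have huniq : ∀ j : X, j ≠ i → (φ (Finsupp.single j 1)) k = 0 := by
        intro j hj
        by_contra hjk
        exact Finset.disjoint_left.mp (h j i hj) (Finsupp.mem_support_iff.mpr hjk)
          (Finsupp.mem_support_iff.mpr hi)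
      rw [apply_eq_of_unique φ k i huniq (m ⊓ n),
        apply_eq_of_unique φ k i huniq m, apply_eq_of_unique φ k i huniq n,
        Finsupp.inf_apply]
      rcases le_total (m i) (n i) with hle | hle
      · rw [min_eq_left hle, min_eq_left (Nat.mul_le_mul_right _ hle)]
      · rw [min_eq_right hle, min_eq_right (Nat.mul_le_mul_right _ hle)]
    · push_neg at hex
      have hz : ∀ p : X →₀ ℕ, (φ p) k = 0 := by
        intro p
        classical
        obtain ⟨i⟩ : Nonempty X := ⟨k⟩
        rw [apply_eq_of_unique φ k i (fun j _ => hex j), hex i, mul_zero]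
      simp [hz]
  · intro h i j hij
    have := h (Finsupp.single i 1) (Finsupp.single j 1)
    have h0 : (Finsupp.single i 1 : X →₀ ℕ) ⊓ Finsupp.single j 1 = 0 := by
      ext x
      rw [Finsupp.inf_apply]
      by_cases hx : x = i
      · subst hx; simp [Finsupp.single_apply, hij.symm]
      · rw [Finsupp.single_eq_of_ne' fun h => hx h.symm]; simp
    rw [h0, map_zero] at this
    rw [Finset.disjoint_left]
    intro a ha hb
    have : ((0 : X →₀ ℕ)) a = min ((φ (Finsupp.single i 1)) a) ((φ (Finsupp.single j 1)) a) := by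
      rw [this, Finsupp.inf_apply]
    simp only [Finsupp.coe_zero, Pi.zero_apply] at this
    rw [Finsupp.mem_support_iff] at ha hb
    rcases le_total ((φ (Finsupp.single i 1)) a) ((φ (Finsupp.single j 1)) a) with hle | hle
    · exact ha (by omega)
    · exact hb (by omega)
end

section
/- Let X be a type, M = (X →₀ ℕ), and φ : M →+ M an additive monoid homomorphism such that for all i ≠ j in X the supports of φ (Finsupp.single i 1) and φ (Finsupp.single j 1) are disjoint, and φ (Finsupp.single i 1) ≠ 0 for every i ∈ X. Then for all m, n ∈ M: (i) m ≤ n if and only if φ m ≤ φ n (in the pointwise order, i.e., m divides n iff σ(m) divides σ(n)); and (ii) φ (m ⊔ n) = φ m ⊔ φ n, where ⊔ is the pointwise maximum (i.e., lcm(σ(m), σ(n)) = σ(lcm(m,n))). -/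
/-- **(Proposition `divcompat`, consequences.)** If the exponent map `φ` of a monomial
endomorphism `σ` of `K[X]` sends distinct variables to monomials with disjoint supports and
no variable to `1`, then `m` divides `n` iff `σ(m)` divides `σ(n)`, and
`lcm(σ(m), σ(n)) = σ(lcm(m, n))`: `σ` is a lattice homomorphism for divisibility. -/
theorem divisibility_lattice_hom {X : Type*} (φ : (X →₀ ℕ) →+ (X →₀ ℕ))
    (hdisj : ∀ i j : X, i ≠ j →
      Disjoint (φ (Finsupp.single i 1)).support (φ (Finsupp.single j 1)).support)
    (hne : ∀ i : X, φ (Finsupp.single i 1) ≠ 0) :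
    ∀ m n : X →₀ ℕ, (m ≤ n ↔ φ m ≤ φ n) ∧ φ (m ⊔ n) = φ m ⊔ φ n := by
  classical
  have expand : ∀ (f : X →₀ ℕ) (k : X),
      φ f k = ∑ j ∈ f.support, f j * φ (Finsupp.single j 1) k := by
    intro f k
    conv_lhs => rw [← f.sum_single]
    rw [map_finsuppSum, Finsupp.sum_apply, Finsupp.sum]
    refine Finset.sum_congr rfl fun j hj => ?_
    have h1 : Finsupp.single j (f j) = f j • Finsupp.single j (1 : ℕ) := by
      rw [Finsupp.smul_single', mul_one]
    rw [h1, map_nsmul, Finsupp.smul_apply, smul_eq_mul]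
  have key : ∀ (f : X →₀ ℕ) (i k : X), k ∈ (φ (Finsupp.single i 1)).support →
      φ f k = f i * φ (Finsupp.single i 1) k := by
    intro f i k hk
    rw [expand]
    refine Finset.sum_eq_single i (fun j hj hji => ?_) (fun hi => ?_)
    · have hknot : k ∉ (φ (Finsupp.single j 1)).support :=
        Finset.disjoint_right.mp (hdisj j i hji) hk
      rw [Finsupp.notMem_support_iff.mp hknot, mul_zero]
    · rw [Finsupp.notMem_support_iff.mp hi, zero_mul]
  have exI : ∀ (f : X →₀ ℕ) (k : X), φ f k ≠ 0 →
      ∃ i, k ∈ (φ (Finsupp.single i 1)).support := by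
    intro f k h
    rw [expand] at h
    obtain ⟨j, hj, hne'⟩ := Finset.exists_ne_zero_of_sum_ne_zero h
    exact ⟨j, Finsupp.mem_support_iff.mpr fun h0 => hne' (by rw [h0, mul_zero])⟩
  have mono : ∀ m n : X →₀ ℕ, m ≤ n → φ m ≤ φ n := by
    intro m n h
    obtain ⟨c, rfl⟩ := le_iff_exists_add.mp h
    rw [map_add]
    exact le_add_of_nonneg_right zero_le
  have rev : ∀ m n : X →₀ ℕ, φ m ≤ φ n → m ≤ n := by
    intro m n h
    rw [Finsupp.le_def]
    intro i
    obtain ⟨k, hk⟩ := Finsupp.support_nonempty_iff.mpr (hne i)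
    have hc : 0 < φ (Finsupp.single i 1) k :=
      Nat.pos_of_ne_zero (Finsupp.mem_support_iff.mp hk)
    have hmn := Finsupp.le_def.mp h k
    rw [key m i k hk, key n i k hk] at hmn
    exact Nat.le_of_mul_le_mul_right hmn hc
  intro m n
  refine ⟨⟨mono m n, rev m n⟩, le_antisymm ?_
    (sup_le (mono m _ le_sup_left) (mono n _ le_sup_right))⟩
  rw [Finsupp.le_def]
  intro k
  by_cases h0 : φ (m ⊔ n) k = 0
  · rw [h0]; exact zero_le
  · obtain ⟨i, hk⟩ := exI _ k h0
    rw [key _ i k hk, Finsupp.sup_apply, Finsupp.sup_apply, key m i k hk, key n i k hk]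
    rcases le_total (m i) (n i) with hle | hle
    · rw [sup_eq_right.mpr hle]
      exact le_sup_of_le_right le_rfl
    · rw [sup_eq_left.mpr hle]
      exact le_sup_of_le_left le_rfl
end

section
/- Let K be a field, m a monomial order on X →₀ ℕ, φ : (X →₀ ℕ) →+ (X →₀ ℕ) an additive homomorphism that is compatible with m (m.toSyn d < m.toSyn e implies m.toSyn (φ d) < m.toSyn (φ e)) and compatible with lcm (φ (d ⊔ e) = φ d ⊔ φ e for all d, e), and let σ : MvPolynomial X K →ₐ[K] MvPolynomial X K be the K-algebra endomorphism with σ (monomial d c) = monomial (φ d) c for all d and c. For nonzero f, g ∈ MvPolynomial X K define l = m.degree f ⊔ m.degree g and spoly(f,g) = (m.leadingCoeff f)⁻¹ • (monomial (l − m.degree f) 1) * f − (m.leadingCoeff g)⁻¹ • (monomial (l − m.degree g) 1) * g. Then for all nonzero f, g: σ (spoly(f,g)) = spoly(σ f, σ g). -/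
variable {X K : Type*} [Field K]

/-- The leading exponent (degree) of a multivariate polynomial with respect to
a monomial order `m`. -/
noncomputable def MonomialOrder.mvDegree (m : MonomialOrder X) (f : MvPolynomial X K) :
    X →₀ ℕ :=
  m.toSyn.symm (f.support.sup m.toSyn)

/-- The leading coefficient of a multivariate polynomial with respect to
a monomial order `m`. -/
noncomputable def MonomialOrder.mvLeadingCoeff (m : MonomialOrder X) (f : MvPolynomial X K) :
    K :=
  f.coeff (m.mvDegree f)

/-- The S-polynomial of `f` and `g` with respect to a monomial order `m`:
`spoly(f,g) = lc(f)⁻¹·(l/lm(f))·f − lc(g)⁻¹·(l/lm(g))·g` where `l = lcm(lm(f), lm(g))`. -/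
noncomputable def MonomialOrder.spoly (m : MonomialOrder X) (f g : MvPolynomial X K) :
    MvPolynomial X K :=
  (m.mvLeadingCoeff f)⁻¹ •
      (MvPolynomial.monomial (m.mvDegree f ⊔ m.mvDegree g - m.mvDegree f) (1 : K)) * f -
    (m.mvLeadingCoeff g)⁻¹ •
      (MvPolynomial.monomial (m.mvDegree f ⊔ m.mvDegree g - m.mvDegree g) (1 : K)) * g

lemma mvDegree_mem_support (m : MonomialOrder X) {f : MvPolynomial X K} (hf : f ≠ 0) :
    m.mvDegree f ∈ f.support := by
  have hne : f.support.Nonempty := MvPolynomial.support_nonempty.mpr hf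
  obtain ⟨d, hd, hsup⟩ := Finset.exists_mem_eq_sup f.support hne m.toSyn
  have : m.mvDegree f = d := by
    simp [MonomialOrder.mvDegree, hsup]
  rwa [this]

lemma toSyn_le_mvDegree (m : MonomialOrder X) {f : MvPolynomial X K} {d : X →₀ ℕ}
    (hd : d ∈ f.support) : m.toSyn d ≤ m.toSyn (m.mvDegree f) := by
  have := Finset.le_sup (f := m.toSyn) hd
  simpa [MonomialOrder.mvDegree] using this

lemma sigma_eq_mapDomain (φ : (X →₀ ℕ) →+ (X →₀ ℕ))
    (σ : MvPolynomial X K →ₐ[K] MvPolynomial X K)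
    (hσ : ∀ (d : X →₀ ℕ) (c : K), σ (MvPolynomial.monomial d c) = MvPolynomial.monomial (φ d) c)
    (f : MvPolynomial X K) : σ f = AddMonoidAlgebra.mapDomain φ f := by
  induction f using MvPolynomial.induction_on' with
  | monomial d c =>
      rw [hσ]
      simp only [← MvPolynomial.single_eq_monomial]
      rw [AddMonoidAlgebra.mapDomain_single]
  | add p q hp hq =>
      rw [map_add, hp, hq, AddMonoidAlgebra.mapDomain_add]

/-- **(Lemma `sigmaspoly`, commutative core.)** If the monomial endomorphism `σ` of
`K[X]` (with exponent map `φ`) is compatible with the monomial order and with lcm's,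
then `σ(spoly(f,g)) = spoly(σ f, σ g)` for all nonzero `f, g`. -/
theorem spoly_map (m : MonomialOrder X) (φ : (X →₀ ℕ) →+ (X →₀ ℕ))
    (hφ : ∀ d e : X →₀ ℕ, m.toSyn d < m.toSyn e → m.toSyn (φ d) < m.toSyn (φ e))
    (hlcm : ∀ d e : X →₀ ℕ, φ (d ⊔ e) = φ d ⊔ φ e)
    (σ : MvPolynomial X K →ₐ[K] MvPolynomial X K)
    (hσ : ∀ (d : X →₀ ℕ) (c : K), σ (MvPolynomial.monomial d c) = MvPolynomial.monomial (φ d) c)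
    (f g : MvPolynomial X K) (hf : f ≠ 0) (hg : g ≠ 0) :
    σ (m.spoly f g) = m.spoly (σ f) (σ g) := by
  classical
  -- φ is injective
  have hinj : Function.Injective φ := by
    intro d e h
    by_contra hne
    rcases lt_trichotomy (m.toSyn d) (m.toSyn e) with h1 | h1 | h1
    · exact absurd (congrArg m.toSyn h) (ne_of_lt (hφ d e h1))
    · exact hne (m.toSyn.injective h1)
    · exact absurd (congrArg m.toSyn h).symm (ne_of_lt (hφ e d h1))
  have hmono : ∀ d e : X →₀ ℕ, m.toSyn d ≤ m.toSyn e → m.toSyn (φ d) ≤ m.toSyn (φ e) := by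
    intro d e h
    rcases h.lt_or_eq with h | h
    · exact (hφ d e h).le
    · rw [m.toSyn.injective h]
  have hmap : ∀ p : MvPolynomial X K, σ p = AddMonoidAlgebra.mapDomain φ p :=
    sigma_eq_mapDomain φ σ hσ
  -- σ p nonzero for p nonzero
  have hcoeff : ∀ (p : MvPolynomial X K) (d : X →₀ ℕ),
      (σ p).coeff (φ d) = p.coeff d := by
    intro p d
    rw [hmap]
    exact Finsupp.mapDomain_apply hinj (AddMonoidAlgebra.coeff p) d
  have hsupp : ∀ p : MvPolynomial X K,
      (σ p).support = p.support.image φ := by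
    intro p
    rw [hmap]
    exact Finsupp.mapDomain_support_of_injective hinj (AddMonoidAlgebra.coeff p)
  -- degree of σ p
  have hdeg : ∀ p : MvPolynomial X K, p ≠ 0 → m.mvDegree (σ p) = φ (m.mvDegree p) := by
    intro p hp
    have hmem : φ (m.mvDegree p) ∈ (σ p).support := by
      rw [hsupp]
      exact Finset.mem_image_of_mem φ (mvDegree_mem_support m hp)
    have hle : ∀ e ∈ (σ p).support, m.toSyn e ≤ m.toSyn (φ (m.mvDegree p)) := by
      intro e he
      rw [hsupp] at he
      obtain ⟨d, hd, rfl⟩ := Finset.mem_image.mp he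
      exact hmono _ _ (toSyn_le_mvDegree m hd)
    have : (σ p).support.sup m.toSyn = m.toSyn (φ (m.mvDegree p)) :=
      le_antisymm (Finset.sup_le hle) (Finset.le_sup hmem)
    simp [MonomialOrder.mvDegree, this]
  -- leading coeff of σ p
  have hlc : ∀ p : MvPolynomial X K, p ≠ 0 → m.mvLeadingCoeff (σ p) = m.mvLeadingCoeff p := by
    intro p hp
    rw [MonomialOrder.mvLeadingCoeff, hdeg p hp, hcoeff]
    rfl
  -- φ commutes with the truncated subtraction appearing in spoly
  have hsub : ∀ d e : X →₀ ℕ, φ (d ⊔ e - d) = φ d ⊔ φ e - φ d := by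
    intro d e
    have h1 : (d ⊔ e - d) + d = d ⊔ e := tsub_add_cancel_of_le le_sup_left
    have h2 : φ (d ⊔ e - d) + φ d = φ d ⊔ φ e := by
      rw [← map_add, h1, hlcm]
    exact eq_tsub_of_add_eq h2
  have hsub' : ∀ d e : X →₀ ℕ, φ (d ⊔ e - e) = φ d ⊔ φ e - φ e := by
    intro d e
    have h1 : (d ⊔ e - e) + e = d ⊔ e := tsub_add_cancel_of_le le_sup_right
    have h2 : φ (d ⊔ e - e) + φ e = φ d ⊔ φ e := by
      rw [← map_add, h1, hlcm]
    exact eq_tsub_of_add_eq h2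
  -- now compute
  rw [MonomialOrder.spoly, MonomialOrder.spoly, map_sub, map_mul, map_mul,
    map_smul, map_smul, hσ, hσ, hdeg f hf, hdeg g hg, hlc f hf, hlc g hg,
    hsub (m.mvDegree f) (m.mvDegree g), hsub' (m.mvDegree f) (m.mvDegree g)]
end

section
/- Let K be a field, m a monomial order on X →₀ ℕ, φ : (X →₀ ℕ) →+ (X →₀ ℕ) an additive homomorphism compatible with m (m.toSyn d < m.toSyn e implies m.toSyn (φ d) < m.toSyn (φ e)), and σ : MvPolynomial X K →ₐ[K] MvPolynomial X K the K-algebra endomorphism with σ (monomial d c) = monomial (φ d) c for all d and c. Let I be an ideal of MvPolynomial X K with σ(I) ⊆ I (I is Σ-invariant). Then the leading-monomial ideal LM(I) := Ideal.span { monomial (m.degree f) 1 : f ∈ I, f ≠ 0 } is also Σ-invariant: σ h ∈ LM(I) for every h ∈ LM(I). -/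
variable {X K : Type*} [Field K]

/-- **The leading-monomial ideal of a `Σ`-invariant ideal is `Σ`-invariant.**
If `σ` (with exponent map `φ` compatible with the monomial order `m`) satisfies `σ(I) ⊆ I`,
then the ideal generated by the leading monomials of the nonzero elements of `I` is closed
under `σ`. -/
theorem leadingMonomialIdeal_invariant (m : MonomialOrder X) (φ : (X →₀ ℕ) →+ (X →₀ ℕ))
    (hφ : ∀ d e : X →₀ ℕ, m.toSyn d < m.toSyn e → m.toSyn (φ d) < m.toSyn (φ e))
    (σ : MvPolynomial X K →ₐ[K] MvPolynomial X K)
    (hσ : ∀ (d : X →₀ ℕ) (c : K), σ (MvPolynomial.monomial d c) = MvPolynomial.monomial (φ d) c)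
    (I : Ideal (MvPolynomial X K)) (hI : ∀ f ∈ I, σ f ∈ I) :
    ∀ h ∈ Ideal.span {p : MvPolynomial X K |
        ∃ f ∈ I, f ≠ 0 ∧ p = MvPolynomial.monomial (m.mvDegree f) (1 : K)},
      σ h ∈ Ideal.span {p : MvPolynomial X K |
        ∃ f ∈ I, f ≠ 0 ∧ p = MvPolynomial.monomial (m.mvDegree f) (1 : K)} := by
  classical
  have hinj : Function.Injective φ := by
    intro a b hab
    by_contra hne
    have hne' : m.toSyn a ≠ m.toSyn b := fun h => hne (m.toSyn.injective h)
    rcases hne'.lt_or_gt with h | h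
    · exact absurd (congrArg m.toSyn hab) (ne_of_lt (hφ _ _ h))
    · exact absurd (congrArg m.toSyn hab) (ne_of_gt (hφ _ _ h))
  have hmono : ∀ d e : X →₀ ℕ, m.toSyn d ≤ m.toSyn e → m.toSyn (φ d) ≤ m.toSyn (φ e) := by
    intro d e h
    rcases h.lt_or_eq with h | h
    · exact (hφ _ _ h).le
    · rw [m.toSyn.injective h]
  -- key lemma : behaviour of σ on nonzero polynomials
  have key : ∀ f : MvPolynomial X K, f ≠ 0 → σ f ≠ 0 ∧ m.mvDegree (σ f) = φ (m.mvDegree f) := by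
    intro f hf
    set D := m.mvDegree f with hD
    have hsupp : f.support.Nonempty := MvPolynomial.support_nonempty.mpr hf
    have hDmem : D ∈ f.support := by
      obtain ⟨d, hd, hsup⟩ := Finset.exists_mem_eq_sup f.support hsupp m.toSyn
      have : D = d := by
        rw [hD, MonomialOrder.mvDegree, hsup, AddEquiv.symm_apply_apply]
      rwa [this]
    have hDsup : ∀ e ∈ f.support, m.toSyn e ≤ m.toSyn D := by
      intro e he
      have : m.toSyn D = f.support.sup m.toSyn := by
        rw [hD, MonomialOrder.mvDegree, AddEquiv.apply_symm_apply]
      rw [this]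
      exact Finset.le_sup he
    have hrep : σ f = ∑ d ∈ f.support, MvPolynomial.monomial (φ d) (MvPolynomial.coeff d f) := by
      conv_lhs => rw [f.as_sum]
      rw [map_sum]
      simp only [hσ]
    have hcoeff : MvPolynomial.coeff (φ D) (σ f) = MvPolynomial.coeff D f := by
      rw [hrep, MvPolynomial.coeff_sum]
      rw [Finset.sum_eq_single D]
      · simp [MvPolynomial.coeff_monomial]
      · intro d _ hd
        rw [MvPolynomial.coeff_monomial, if_neg (fun h => hd (hinj h))]
      · intro h
        exact absurd hDmem h
    have hcoeffne : MvPolynomial.coeff (φ D) (σ f) ≠ 0 := by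
      rw [hcoeff]
      exact MvPolynomial.mem_support_iff.mp hDmem
    have hσfne : σ f ≠ 0 := fun h => hcoeffne (by simp [h])
    refine ⟨hσfne, ?_⟩
    have hbound : ∀ e ∈ (σ f).support, m.toSyn e ≤ m.toSyn (φ D) := by
      intro e he
      have hce : MvPolynomial.coeff e (σ f) ≠ 0 := MvPolynomial.mem_support_iff.mp he
      rw [hrep, MvPolynomial.coeff_sum] at hce
      obtain ⟨d, hd, hne⟩ := Finset.exists_ne_zero_of_sum_ne_zero hce
      have : φ d = e := by
        by_contra h
        rw [MvPolynomial.coeff_monomial, if_neg h] at hne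
        exact hne rfl
      rw [← this]
      exact hmono _ _ (hDsup d hd)
    have hsup : (σ f).support.sup m.toSyn = m.toSyn (φ D) := by
      apply le_antisymm
      · exact Finset.sup_le hbound
      · exact Finset.le_sup (MvPolynomial.mem_support_iff.mpr hcoeffne)
    rw [MonomialOrder.mvDegree, hsup, AddEquiv.symm_apply_apply]
  intro h hh
  refine Submodule.span_induction ?_ ?_ ?_ ?_ hh
  · rintro p ⟨f, hfI, hfne, rfl⟩
    rw [hσ]
    obtain ⟨h1, h2⟩ := key f hfne
    apply Ideal.subset_span
    exact ⟨σ f, hI f hfI, h1, by rw [h2]⟩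
  · simp
  · intro x y _ _ hx hy
    rw [map_add]; exact Ideal.add_mem _ hx hy
  · intro c x _ hx
    rw [smul_eq_mul, map_mul]
    exact Ideal.mul_mem_left _ _ hx
end

section
/- Let X be a type. Define θ : FreeMonoid X → ((X × ℕ) →₀ ℕ) sending a word w of length d to Σ_{k=0}^{d−1} Finsupp.single (w_k, k+1) 1, where w_k is the k-th letter of w (θ maps the word x_{i_1}⋯x_{i_d} to the exponent vector of the letterplace monomial x_{i_1}(1)⋯x_{i_d}(d)). Then: (i) θ is injective; and (ii) θ (u * v) = θ u + Sh^[length u] (θ v) for all words u, v, where Sh is the shift homomorphism. (Hence w ↦ (θ w, length w) is an injective monoid homomorphism from the free monoid of words to the monoid of monomials of the skew letterplace algebra.) -/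
/-- The shift homomorphism on the exponent monoid of the letterplace ring `K[X × ℕ]`:
the exponent map of the shift endomorphism `σ : x_i(j) ↦ x_i(j+1)`. -/
noncomputable def lpShift (X : Type*) : ((X × ℕ) →₀ ℕ) →+ ((X × ℕ) →₀ ℕ) :=
  Finsupp.mapDomain.addMonoidHom (fun p : X × ℕ => (p.1, p.2 + 1))

/-- The letterplace map on words: the word `x_{i_1}⋯x_{i_d}` is sent to the exponent vector of
the letterplace monomial `x_{i_1}(1)⋯x_{i_d}(d)`. -/
noncomputable def lpTheta {X : Type*} (w : FreeMonoid X) : (X × ℕ) →₀ ℕ :=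
  ∑ k : Fin (FreeMonoid.toList w).length,
    Finsupp.single ((FreeMonoid.toList w).get k, (k : ℕ) + 1) 1

lemma lpTheta_apply_zero {X : Type*} (w : FreeMonoid X) (x : X) : lpTheta w (x, 0) = 0 := by
  unfold lpTheta
  rw [Finsupp.finset_sum_apply]
  exact Finset.sum_eq_zero fun k _ => by simp [Finsupp.single_apply]

lemma lpTheta_one {X : Type*} : lpTheta (X := X) 1 = 0 := by
  unfold lpTheta; simp

lemma lpTheta_cons {X : Type*} (a : X) (w : FreeMonoid X) :
    lpTheta (FreeMonoid.of a * w) = Finsupp.single (a, 1) 1 + lpShift X (lpTheta w) := by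
  have h : lpTheta (FreeMonoid.of a * w)
      = ∑ k : Fin ((FreeMonoid.toList w).length + 1),
        Finsupp.single ((a :: FreeMonoid.toList w).get k, (k : ℕ) + 1) 1 := rfl
  rw [h, Fin.sum_univ_succ]
  congr 1
  unfold lpTheta lpShift
  rw [map_sum]
  simp [Finsupp.mapDomain_single, add_assoc]

lemma lpShift_apply_one {X : Type*} (f : (X × ℕ) →₀ ℕ) (x : X) :
    lpShift X f (x, 1) = f (x, 0) := by
  have hinj : Function.Injective (fun p : X × ℕ => (p.1, p.2 + 1)) := by
    intro p q h
    simpa [Prod.ext_iff] using h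
  exact Finsupp.mapDomain_apply hinj f (x, 0)

lemma lpShift_injective {X : Type*} : Function.Injective (lpShift X) := by
  apply Finsupp.mapDomain_injective
  intro p q h
  simpa [Prod.ext_iff] using h

lemma lpShift_iter_add {X : Type*} (n : ℕ) (f g : (X × ℕ) →₀ ℕ) :
    (⇑(lpShift X))^[n] (f + g) = (⇑(lpShift X))^[n] f + (⇑(lpShift X))^[n] g := by
  induction n generalizing f g with
  | zero => rfl
  | succ n ih => simp [Function.iterate_succ_apply, map_add, ih]


/-- **The letterplace map is an injective "twisted" homomorphism.** `θ` is injective and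
`θ(u·v) = θ(u) + σ^{|u|}(θ(v))`; hence `w ↦ (θ w, |w|)` is an injective monoid homomorphism
from words to the monomials of the skew letterplace algebra. -/
theorem lpTheta_injective_and_mul {X : Type*} :
    Function.Injective (lpTheta (X := X)) ∧
      ∀ u v : FreeMonoid X,
        lpTheta (u * v) = lpTheta u + (⇑(lpShift X))^[FreeMonoid.length u] (lpTheta v) := by
  constructor
  · intro u v
    induction u using FreeMonoid.recOn generalizing v with
    | one =>
      intro h
      induction v using FreeMonoid.casesOn with
      | one => rfl
      | of_mul b v' =>
        exfalso
        have h1 := congrArg (fun f => f (b, 1)) h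
        simp [lpTheta_one, lpTheta_cons, Finsupp.single_apply,
          lpShift_apply_one, lpTheta_apply_zero] at h1
    | of_mul a u' IH =>
      intro h
      induction v using FreeMonoid.casesOn with
      | one =>
        exfalso
        have h1 := congrArg (fun f => f (a, 1)) h
        simp [lpTheta_one, lpTheta_cons, Finsupp.single_apply,
          lpShift_apply_one, lpTheta_apply_zero] at h1
      | of_mul b v' =>
        rw [lpTheta_cons, lpTheta_cons] at h
        have hab : a = b := by
          have h1 := congrArg (fun f => f (a, 1)) h
          simp [Finsupp.single_apply, lpShift_apply_one, lpTheta_apply_zero] at h1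
          classical
          have h1' := h1.symm
          rw [Finsupp.single_apply] at h1'
          by_contra hne
          rw [if_neg (fun hc => hne ((Prod.ext_iff.mp hc).1.symm))] at h1'
          exact one_ne_zero h1'.symm
        subst hab
        have h2 := lpShift_injective (add_left_cancel h)
        rw [IH h2]
  · intro u v
    induction u using FreeMonoid.recOn with
    | one => simp [lpTheta_one]
    | of_mul a u' IH =>
      rw [mul_assoc, lpTheta_cons, IH, map_add, lpTheta_cons, add_assoc]
      congr 1
      have hlen : FreeMonoid.length (FreeMonoid.of a * u') = FreeMonoid.length u' + 1 := by
        simp [FreeMonoid.length_mul, add_comm]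
      rw [hlen]
      congr 1
      exact ((Function.iterate_succ_apply' _ _ _).symm.trans
        (Function.iterate_succ_apply _ _ _))
end

section
/- Let X be a type and let ≺ be a strict linear order (irreflexive, transitive, total) on (X →₀ ℕ) such that (i) no element is ≺ 0 (so 0, the monomial 1, is the least element), and (ii) for all m, n, t, m ≺ n implies t + m ≺ t + n (compatibility with multiplication of monomials). Then ≺ is well-founded (hence a monomial ordering) if and only if the restriction of ≺ to the set of variable exponent vectors { Finsupp.single x 1 : x ∈ X } is well-founded. -/
/-- **(Higman's lemma criterion for monomial orderings.)** A strict linear order on the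
monomials of `K[X]` (with countably many variables allowed), compatible with multiplication
and with `1` as least element, is a well-ordering — i.e. a monomial ordering — if and only if
its restriction to the set of variables is a well-ordering. -/
theorem monomialOrdering_iff_wellFounded_on_variables {X : Type*}
    (r : (X →₀ ℕ) → (X →₀ ℕ) → Prop)
    (hirr : ∀ m, ¬ r m m)
    (htrans : ∀ m n t, r m n → r n t → r m t)
    (htotal : ∀ m n, m ≠ n → r m n ∨ r n m)
    (hbot : ∀ m, ¬ r m 0)
    (hcompat : ∀ m n t : X →₀ ℕ, r m n → r (t + m) (t + n)) :
    WellFounded r ↔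
      WellFounded (fun a b : {d : X →₀ ℕ // ∃ x : X, d = Finsupp.single x 1} =>
        r a.1 b.1) := by
  constructor
  · intro h
    exact InvImage.wf Subtype.val h
  · intro h
    -- the weak relation
    set R : (X →₀ ℕ) → (X →₀ ℕ) → Prop := fun m n => m = n ∨ r m n with hR
    have hRtrans : ∀ m n t, R m n → R n t → R m t := by
      rintro m n t (rfl | h1) (rfl | h2)
      · exact Or.inl rfl
      · exact Or.inr h2
      · exact Or.inr h1
      · exact Or.inr (htrans _ _ _ h1 h2)
    have hR0 : ∀ m, R 0 m := by
      intro m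
      by_cases hm : m = 0
      · exact Or.inl hm.symm
      · rcases htotal 0 m (fun e => hm e.symm) with h1 | h1
        · exact Or.inr h1
        · exact absurd h1 (hbot m)
    have hRcompat : ∀ m n t : X →₀ ℕ, R m n → R (t + m) (t + n) := by
      rintro m n t (rfl | h1)
      · exact Or.inl rfl
      · exact Or.inr (hcompat _ _ _ h1)
    -- weak relation on variables
    set s : X → X → Prop :=
      fun x y => R (Finsupp.single x 1) (Finsupp.single y 1) with hs
    have hsrefl : IsRefl X s := ⟨fun x => Or.inl rfl⟩
    have hstrans : IsTrans X s := ⟨fun x y z => hRtrans _ _ _⟩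
    -- `univ` is PWO under `s`
    have hpwo : (Set.univ : Set X).PartiallyWellOrderedOn s := by
      rw [Set.partiallyWellOrderedOn_iff_exists_lt]
      intro f _
      set F : ℕ → {d : X →₀ ℕ // ∃ x : X, d = Finsupp.single x 1} :=
        fun n => ⟨Finsupp.single (f n) 1, f n, rfl⟩ with hF
      obtain ⟨m0, hm0mem, hmin⟩ :=
        h.has_min (Set.range F) (Set.range_nonempty F)
      obtain ⟨i, hi⟩ := hm0mem
      refine ⟨i, i + 1, Nat.lt_succ_self i, ?_⟩
      by_cases he : Finsupp.single (f i) 1 = Finsupp.single (f (i + 1)) 1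
      · exact Or.inl he
      rcases htotal _ _ he with h1 | h1
      · exact Or.inr h1
      · exfalso
        have := hmin (F (i + 1)) (Set.mem_range_self _)
        rw [← hi] at this
        exact this h1
    -- Higman's lemma
    haveI : IsPreorder X s := { refl := fun x => Or.inl rfl, trans := fun x y z => hRtrans _ _ _ }
    have higman := hpwo.partiallyWellOrderedOn_sublistForall₂ s
    -- monomial associated to a list of variables
    set φ : List X → (X →₀ ℕ) := fun l => (l.map fun x => Finsupp.single x 1).sum with hφ
    have hφnil : φ [] = 0 := rfl
    have hφcons : ∀ a l, φ (a :: l) = Finsupp.single a 1 + φ l := fun a l => by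
      simp [hφ]
    -- sublist embedding implies weak inequality of monomials
    have key : ∀ {l₁ l₂ : List X}, List.SublistForall₂ s l₁ l₂ → R (φ l₁) (φ l₂) := by
      intro l₁ l₂ hl
      induction hl with
      | nil => rw [hφnil]; exact hR0 _
      | @cons a b l₁ l₂ hab _ ih =>
        rw [hφcons, hφcons]
        refine hRtrans _ (Finsupp.single b 1 + φ l₁) _ ?_ (hRcompat _ _ _ ih)
        rw [add_comm (Finsupp.single a 1), add_comm (Finsupp.single b 1)]
        exact hRcompat _ _ _ hab
      | @cons_right b l₁ l₂ _ ih =>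
        refine hRtrans _ _ _ ih ?_
        rw [hφcons]
        have : R 0 (Finsupp.single b 1) := hR0 _
        have := hRcompat _ _ (φ l₂) this
        rw [add_zero, add_comm] at this
        exact this
    -- every monomial is `φ` of some list
    have surj : ∀ m : X →₀ ℕ, ∃ l : List X, φ l = m := by
      intro m
      induction m using Finsupp.induction with
      | zero => exact ⟨[], rfl⟩
      | single_add a b f _ _ ih =>
        obtain ⟨l, hl⟩ := ih
        refine ⟨List.replicate b a ++ l, ?_⟩
        have hrep : ∀ (n : ℕ), φ (List.replicate n a) = Finsupp.single a n := by
          intro n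
          induction n with
          | zero => simp [hφ]
          | succ k ihk =>
            rw [List.replicate_succ, hφcons, ihk, ← Finsupp.single_add]
            congr 1
            omega
        have : φ (List.replicate b a ++ l) = φ (List.replicate b a) + φ l := by
          simp [hφ]
        rw [this, hrep, hl]
    -- conclude well-foundedness
    haveI : IsIrrefl _ r := ⟨hirr⟩
    haveI : IsTrans _ r := ⟨htrans⟩
    haveI : IsStrictOrder _ r := ⟨⟩
    rw [RelEmbedding.wellFounded_iff_isEmpty]
    constructor
    intro f
    choose L hL using fun n => surj (f n)
    obtain ⟨i, j, hij, hsub⟩ := higman.exists_lt (f := L) (fun n x _ => Set.mem_univ x)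
    have h1 : R (f i) (f j) := by rw [← hL i, ← hL j]; exact key hsub
    have h2 : r (f j) (f i) := f.map_rel_iff.2 hij
    rcases h1 with h1 | h1
    · rw [h1] at h2; exact hirr _ h2
    · exact hirr _ (htrans _ _ _ h1 h2)
end

section
/- Let K be a field, P = MvPolynomial ℕ K the ring of ordinary difference polynomials in the variables x(0), x(1), x(2), …, and for i ∈ ℕ let σ^i : P → P be the shift endomorphism MvPolynomial.rename (· + i), so σ^i (x(j)) = x(j+i). Set g₁ = x(2)·x(0) − x(1), g₂ = x(4)·x(1) − x(3)·x(0), g₃ = x(3)²·x(0) − x(3), g₄ = x(4)·x(3)·x(0) − x(4), g₅ = x(5) − x(4)·x(0). Then the ideal of P generated by { σ^i g₁ : i ∈ ℕ } equals the ideal generated by { σ^i g_t : i ∈ ℕ, t ∈ {1,2,3,4,5} }; in particular g₂, g₃, g₄, g₅ all belong to the difference ideal Σ-generated by g₁. -/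
open MvPolynomial

variable (K : Type*) [Field K]

/-- `g₁ = x(2)x(0) − x(1)`, the generator of the difference ideal of Section 8. -/
noncomputable def diffG1 : MvPolynomial ℕ K := X 2 * X 0 - X 1

/-- The finite Gröbner difference basis
`g₁ = x(2)x(0) − x(1)`, `g₂ = x(4)x(1) − x(3)x(0)`, `g₃ = x(3)²x(0) − x(3)`,
`g₄ = x(4)x(3)x(0) − x(4)`, `g₅ = x(5) − x(4)x(0)`. -/
noncomputable def diffBasis : Set (MvPolynomial ℕ K) :=
  {X 2 * X 0 - X 1, X 4 * X 1 - X 3 * X 0, X 3 ^ 2 * X 0 - X 3,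
    X 4 * X 3 * X 0 - X 4, X 5 - X 4 * X 0}

/-- **(Section 8 example.)** The difference ideal `Σ`-generated by `g₁ = x(2)x(0) − x(1)` in
the ring of ordinary difference polynomials equals the ideal generated by all shifts of
`g₁, …, g₅`; in particular `g₂, g₃, g₄, g₅` belong to the difference ideal generated
by `g₁`. -/
theorem difference_ideal_example :
    Ideal.span (Set.range fun i : ℕ => rename (· + i) (diffG1 K)) =
      Ideal.span (⋃ g ∈ diffBasis K, Set.range fun i : ℕ => rename (· + i) g) := by
  set I := Ideal.span (Set.range fun i : ℕ => rename (· + i) (diffG1 K)) with hI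
  have h1 : ∀ i : ℕ, rename (· + i) (diffG1 K) ∈ I := fun i =>
    Ideal.subset_span ⟨i, rfl⟩
  have hshift : ∀ f : MvPolynomial ℕ K, (∀ i : ℕ, rename (· + i) f ∈ I) →
      ∀ a i : ℕ, rename (· + i) (rename (· + a) f) ∈ I := by
    intro f hf a i
    rw [rename_rename]
    have : ((· + i) ∘ (· + a) : ℕ → ℕ) = (· + (a + i)) := by
      funext j; simp [Function.comp]; omega
    rw [this]; exact hf _
  have hmem := hshift (diffG1 K) h1
  -- g₂
  have c2 : ∀ i : ℕ, rename (· + i) (X 4 * X 1 - X 3 * X 0 : MvPolynomial ℕ K) ∈ I := by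
    intro i
    have e : (X 4 * X 1 - X 3 * X 0 : MvPolynomial ℕ K) =
        X 0 * rename (· + 2) (diffG1 K) - X 4 * diffG1 K := by
      simp [diffG1]; ring
    rw [e]; simp only [map_sub, map_mul]
    exact sub_mem (Ideal.mul_mem_left _ _ (hmem 2 i)) (Ideal.mul_mem_left _ _ (h1 i))
  -- g₃
  have c3 : ∀ i : ℕ, rename (· + i) (X 3 ^ 2 * X 0 - X 3 : MvPolynomial ℕ K) ∈ I := by
    intro i
    have e : (X 3 ^ 2 * X 0 - X 3 : MvPolynomial ℕ K) =
        X 4 * X 3 * diffG1 K + X 4 * rename (· + 1) (diffG1 K)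
          + (1 - X 3 * X 0) * rename (· + 2) (diffG1 K) := by
      simp [diffG1]; ring
    rw [e]; simp only [map_add, map_mul]
    exact add_mem (add_mem (Ideal.mul_mem_left _ _ (h1 i))
      (Ideal.mul_mem_left _ _ (hmem 1 i))) (Ideal.mul_mem_left _ _ (hmem 2 i))
  -- g₄
  have c4 : ∀ i : ℕ, rename (· + i) (X 4 * X 3 * X 0 - X 4 : MvPolynomial ℕ K) ∈ I := by
    intro i
    have e : (X 4 * X 3 * X 0 - X 4 : MvPolynomial ℕ K) =
        X 5 * (X 3 ^ 2 * X 0 - X 3) + (1 - X 3 * X 0) * rename (· + 3) (diffG1 K) := by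
      simp [diffG1]; ring
    rw [e]; simp only [map_add, map_mul]
    exact add_mem (Ideal.mul_mem_left _ _ (c3 i)) (Ideal.mul_mem_left _ _ (hmem 3 i))
  -- g₅
  have c5 : ∀ i : ℕ, rename (· + i) (X 5 - X 4 * X 0 : MvPolynomial ℕ K) ∈ I := by
    intro i
    have e : (X 5 - X 4 * X 0 : MvPolynomial ℕ K) =
        X 5 * (X 4 * X 1 - X 3 * X 0) + X 0 * rename (· + 3) (diffG1 K)
          - rename (· + 1) (X 4 * X 3 * X 0 - X 4 : MvPolynomial ℕ K) := by
      simp [diffG1]; ring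
    rw [e, map_sub, map_add, map_mul, map_mul]
    exact sub_mem (add_mem (Ideal.mul_mem_left _ _ (c2 i)) (Ideal.mul_mem_left _ _ (hmem 3 i)))
      (hshift _ c4 1 i)
  apply le_antisymm
  · rw [hI, Ideal.span_le]
    rintro p ⟨i, rfl⟩
    exact Ideal.subset_span (Set.mem_biUnion (Set.mem_insert _ _) ⟨i, rfl⟩)
  · rw [Ideal.span_le]
    intro p hp
    simp only [diffBasis, Set.mem_iUnion, Set.mem_insert_iff, Set.mem_singleton_iff,
      Set.mem_range, exists_prop] at hp
    obtain ⟨g, hg, i, rfl⟩ := hp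
    rcases hg with rfl | rfl | rfl | rfl | rfl
    exacts [h1 i, c2 i, c3 i, c4 i, c5 i]
end
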